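/- Let p be a prime and let G be a group with a normal subgroup H of index p such that H is a finite, nontrivial p-group. Suppose there exists a simple virtual endomorphism φ : H → G whose image φ(H) is a regular p-group, i.e., for all a, b ∈ φ(H) there exists c in the commutator subgroup of the subgroup generated by a and b such that (a·b)^p = a^p · b^p · c^p. Then there exists an element of order p in G \ H (the extension splits), and every element of H satisfies h^p = 1 (H has exponent p). -/

import Mathlib

private lemma conj_pow_aux {G : Type*} [Group G] (g w : G) (n : ℕ) :
    (g * w * g⁻¹) ^ n = g * w ^ n * g⁻¹ := by
  induction n with
  | zero => simp
  | succ n ih => rw [pow_succ, pow_succ, ih]; group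

private lemma closure_normal_of_conj {G : Type*} [Group G] {S : Set G}
    (h : ∀ (g : G), ∀ x ∈ S, g * x * g⁻¹ ∈ S) : (Subgroup.closure S).Normal := by
  constructor
  intro n hn g
  have h1 : ⇑(MulAut.conj g).toMonoidHom '' S ⊆ S := by
    rintro _ ⟨x, hx, rfl⟩
    simpa [MulAut.conj_apply] using h g x hx
  have h2 : (MulAut.conj g).toMonoidHom n ∈
      (Subgroup.closure S).map (MulAut.conj g).toMonoidHom :=
    Subgroup.mem_map_of_mem _ hn
  rw [MonoidHom.map_closure] at h2
  have h3 := Subgroup.closure_mono h1 h2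
  simpa [MulAut.conj_apply] using h3

private lemma phi_inv_of_gen {G : Type*} [Group G] (H : Subgroup G) (φ : H →* G) (S : Set G)
    (hS : ∀ x ∈ S, x ∈ H)
    (hgen : ∀ x, ∀ hx : x ∈ H, x ∈ S → φ ⟨x, hx⟩ ∈ Subgroup.closure S) :
    ∀ x, ∀ hx : x ∈ H, x ∈ Subgroup.closure S → φ ⟨x, hx⟩ ∈ Subgroup.closure S := by
  intro x hx hcl
  have hle : Subgroup.closure S ≤ ((Subgroup.closure S).comap φ).map H.subtype := by
    rw [Subgroup.closure_le]
    intro y hy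
    exact ⟨⟨y, hS y hy⟩, hgen y (hS y hy) hy, rfl⟩
  obtain ⟨z, hz, hzx⟩ := hle hcl
  have hxz : (⟨x, hx⟩ : H) = z := Subtype.ext hzx.symm
  rw [hxz]
  exact hz

/-- **Proposition (regular image).**
Let `G` be a group with a normal subgroup `H` of index `p`, where `H` is a
finite nontrivial `p`-group.  Suppose `φ : H → G` is a simple virtual
endomorphism whose image `φ(H)` is a regular `p`-group: for all
`a, b ∈ φ(H)` there is `c ∈ [⟨a,b⟩, ⟨a,b⟩]` with `(ab)^p = a^p b^p c^p`.
Then the extension splits (there is an element of order `p` in `G \ H`) and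
`H` has exponent `p`. -/
theorem regular_image_implies_split_and_exponent_p
    (p : ℕ) (hp : p.Prime) (G : Type*) [Group G]
    (H : Subgroup G) [H.Normal] (hidx : H.index = p)
    [Finite H] (hne : H ≠ ⊥) (hpG : IsPGroup p H)
    (φ : H →* G)
    (hsimple : ∀ N : Subgroup G, N.Normal → ∀ hle : N ≤ H,
        (∀ x, ∀ hx : x ∈ N, φ ⟨x, hle hx⟩ ∈ N) → N = ⊥)
    (hreg : ∀ a b : G, a ∈ φ.range → b ∈ φ.range →
      ∃ c ∈ ⁅Subgroup.closure ({a, b} : Set G), Subgroup.closure ({a, b} : Set G)⁆,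
        (a * b) ^ p = a ^ p * b ^ p * c ^ p) :
    (∃ a : G, a ∉ H ∧ orderOf a = p) ∧ ∀ h ∈ H, h ^ p = 1 := by
  haveI : Fact p.Prime := ⟨hp⟩
  have hcard : Nat.card (G ⧸ H) = p := hidx
  haveI : IsCyclic (G ⧸ H) := isCyclic_of_prime_card hcard
  letI : CommGroup (G ⧸ H) := IsCyclic.commGroup
  -- commutators of `G` lie in `H`
  open scoped commutatorElement in
  have hcommH : ∀ x y : G, ⁅x, y⁆ ∈ H := by
    intro x y
    rw [← QuotientGroup.eq_one_iff]
    show QuotientGroup.mk' H ⁅x, y⁆ = 1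
    rw [map_commutatorElement, commutatorElement_eq_one_iff_mul_comm]
    exact mul_comm _ _
  -- there is `z ∈ H`, `z ≠ 1`, `z ^ p = 1`
  obtain ⟨⟨y, hyH⟩, hy1⟩ := Subgroup.ne_bot_iff_exists_ne_one.mp hne
  have hy1' : y ≠ 1 := by simpa [Subtype.ext_iff] using hy1
  obtain ⟨k, hk⟩ := hpG ⟨y, hyH⟩
  have hyk : y ^ p ^ k = 1 := by
    have := congrArg Subtype.val hk
    simpa using this
  obtain ⟨m, hmk, hm⟩ := (Nat.dvd_prime_pow hp).mp (orderOf_dvd_of_pow_eq_one hyk)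
  have hm0 : m ≠ 0 := by
    rintro rfl
    exact hy1' (orderOf_eq_one_iff.mp (by simpa using hm))
  set z := y ^ p ^ (m - 1) with hzdef
  have hzH : z ∈ H := H.pow_mem hyH _
  have hzp : z ^ p = 1 := by
    rw [hzdef, ← pow_mul, ← pow_succ, Nat.sub_add_cancel (Nat.one_le_iff_ne_zero.mpr hm0),
      ← hm]
    exact pow_orderOf_eq_one y
  have hz1 : z ≠ 1 := by
    intro h
    have hd : orderOf y ∣ p ^ (m - 1) := orderOf_dvd_of_pow_eq_one h
    rw [hm] at hd
    have := (Nat.pow_dvd_pow_iff_le_right hp.one_lt).mp hd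
    omega
  -- Step 1: produce `x ∈ H` with `x ^ p = 1` and `φ x ∉ H`
  obtain ⟨x, hxH, hxp, haH⟩ :
      ∃ x, ∃ hx : x ∈ H, x ^ p = 1 ∧ φ ⟨x, hx⟩ ∉ H := by
    by_contra hcon
    push_neg at hcon
    set S : Set G := {w | w ∈ H ∧ w ^ p = 1} with hSdef
    have hSH : ∀ w ∈ S, w ∈ H := fun w hw => hw.1
    have hle : Subgroup.closure S ≤ H := (Subgroup.closure_le H).mpr hSH
    have hnormal : (Subgroup.closure S).Normal := by
      apply closure_normal_of_conj
      rintro g w ⟨hwH, hwp⟩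
      refine ⟨Subgroup.Normal.conj_mem ‹H.Normal› w hwH g, ?_⟩
      rw [conj_pow_aux, hwp, mul_one, mul_inv_cancel]
    have hgen : ∀ w, ∀ hw : w ∈ H, w ∈ S → φ ⟨w, hw⟩ ∈ Subgroup.closure S := by
      rintro w hw ⟨hwH, hwp⟩
      have h1 : ((⟨w, hw⟩ : H) ^ p) = (1 : H) := by
        apply Subtype.ext
        simpa using hwp
      have h2 : (φ ⟨w, hw⟩) ^ p = 1 := by
        rw [← map_pow, h1, map_one]
      exact Subgroup.subset_closure ⟨hcon w hw hwp, h2⟩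
    have hbot := hsimple (Subgroup.closure S) hnormal hle
      (fun w hw => phi_inv_of_gen H φ S hSH hgen w (hle hw) hw)
    have hzS : z ∈ Subgroup.closure S := Subgroup.subset_closure ⟨hzH, hzp⟩
    rw [hbot, Subgroup.mem_bot] at hzS
    exact hz1 hzS
  set a := φ ⟨x, hxH⟩ with hadef
  have hap : a ^ p = 1 := by
    have h1 : ((⟨x, hxH⟩ : H) ^ p) = (1 : H) := by
      apply Subtype.ext
      simpa using hxp
    rw [hadef, ← map_pow, h1, map_one]
  have ha1 : a ≠ 1 := fun h => haH (h ▸ H.one_mem)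
  have hamem : a ∈ φ.range := ⟨⟨x, hxH⟩, rfl⟩
  -- Step 2: exponent p
  set S₂ : Set G := (fun h : G => h ^ p) '' (H : Set G) with hS₂def
  have hS₂H : ∀ w ∈ S₂, w ∈ H := by
    rintro _ ⟨h, hh, rfl⟩
    exact H.pow_mem hh p
  have hle₂ : Subgroup.closure S₂ ≤ H := (Subgroup.closure_le H).mpr hS₂H
  have hnormal₂ : (Subgroup.closure S₂).Normal := by
    apply closure_normal_of_conj
    rintro g _ ⟨h, hh, rfl⟩
    refine ⟨g * h * g⁻¹, Subgroup.Normal.conj_mem ‹H.Normal› h hh g, ?_⟩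
    show (g * h * g⁻¹) ^ p = g * h ^ p * g⁻¹
    exact conj_pow_aux g h p
  -- key: `q ^ p ∈ closure S₂` for every `q` in the range of `φ`
  have hkey : ∀ q : G, q ∈ φ.range → q ^ p ∈ Subgroup.closure S₂ := by
    intro q hq
    have habar : ((a : G) : G ⧸ H) ≠ 1 := by
      rw [Ne, QuotientGroup.eq_one_iff]
      exact haH
    have horda : orderOf ((a : G) : G ⧸ H) = p := by
      have hdvd : orderOf ((a : G) : G ⧸ H) ∣ p := hcard ▸ orderOf_dvd_natCard _
      rcases hp.eq_one_or_self_of_dvd _ hdvd with h | h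
      · exact absurd (orderOf_eq_one_iff.mp h) habar
      · exact h
    have htop : Subgroup.zpowers ((a : G) : G ⧸ H) = ⊤ := by
      rw [← Subgroup.index_eq_one]
      have h2 := Subgroup.card_mul_index (Subgroup.zpowers ((a : G) : G ⧸ H))
      rw [Nat.card_zpowers, horda, hcard] at h2
      have hp0 : p ≠ 0 := hp.ne_zero
      exact mul_left_cancel₀ hp0 (h2.trans (mul_one p).symm)
    obtain ⟨i, hi⟩ := Subgroup.mem_zpowers_iff.mp
      (htop ▸ Subgroup.mem_top ((q : G) : G ⧸ H))
    set u := (a ^ i)⁻¹ * q with hudef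
    have huH : u ∈ H := by
      rw [← QuotientGroup.eq_one_iff]
      have h3 : ((a ^ i : G) : G ⧸ H) = ((a : G) : G ⧸ H) ^ i :=
        map_zpow (QuotientGroup.mk' H) a i
      calc ((u : G) : G ⧸ H) = (((a ^ i)⁻¹ * q : G) : G ⧸ H) := rfl
        _ = (((a ^ i : G) : G ⧸ H))⁻¹ * ((q : G) : G ⧸ H) := by
            rw [QuotientGroup.mk_mul, QuotientGroup.mk_inv]
        _ = 1 := by rw [h3, hi, inv_mul_cancel]
    have humem : u ∈ φ.range :=
      Subgroup.mul_mem _ (Subgroup.inv_mem _ (Subgroup.zpow_mem _ hamem i)) hq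
    have haimem : a ^ i ∈ φ.range := Subgroup.zpow_mem _ hamem i
    obtain ⟨c, hc, heq⟩ := hreg (a ^ i) u haimem humem
    have haip : (a ^ i) ^ p = 1 := by
      rw [← zpow_natCast (a ^ i) p, ← zpow_mul, mul_comm, zpow_mul, zpow_natCast, hap,
        one_zpow]
    have hqeq : a ^ i * u = q := by
      rw [hudef, mul_inv_cancel_left]
    have hcH : c ∈ H :=
      (Subgroup.commutator_le.mpr fun g₁ _ g₂ _ => hcommH g₁ g₂) hc
    rw [← hqeq, heq, haip, one_mul]
    exact Subgroup.mul_mem _ (Subgroup.subset_closure ⟨u, huH, rfl⟩)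
      (Subgroup.subset_closure ⟨c, hcH, rfl⟩)
  have hgen₂ : ∀ w, ∀ hw : w ∈ H, w ∈ S₂ → φ ⟨w, hw⟩ ∈ Subgroup.closure S₂ := by
    rintro _ hw ⟨h, hh, rfl⟩
    have h1 : (⟨h ^ p, hw⟩ : H) = (⟨h, hh⟩ : H) ^ p := by
      apply Subtype.ext
      simp
    rw [h1, map_pow]
    exact hkey _ ⟨⟨h, hh⟩, rfl⟩
  have hbot₂ := hsimple (Subgroup.closure S₂) hnormal₂ hle₂
    (fun w hw => phi_inv_of_gen H φ S₂ hS₂H hgen₂ w (hle₂ hw) hw)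
  constructor
  · exact ⟨a, haH, orderOf_eq_prime hap ha1⟩
  · intro h hh
    have : h ^ p ∈ Subgroup.closure S₂ := Subgroup.subset_closure ⟨h, hh, rfl⟩
    rw [hbot₂, Subgroup.mem_bot] at this
    exact this
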